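/- Let N = 3. For parameters (Δ, σᵤ, Σ₀) with Δ > 0, σᵤ > 0, Σ₀ > 0, let β̂^{Δ,σᵤ,Σ₀} be Kyle's three-period equilibrium and T̃_{Δ,σᵤ,Σ₀}(β) := T_{Δ,σᵤ,Σ₀}(β, β̂₂^{Δ,σᵤ,Σ₀}, β̂₃^{Δ,σᵤ,Σ₀})₁ the first coordinate of the policy-iteration map with these parameters. Then the derivative of T̃ at the equilibrium first coordinate does not depend on the parameters: T̃′_{Δ,σᵤ,Σ₀}(β̂₁^{Δ,σᵤ,Σ₀}) = T̃′_{1,1,1}(β̂₁^{1,1,1}) for all Δ, σᵤ, Σ₀ > 0. -/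

import Mathlib

/-- The posterior-variance sequence `Σₙ^β` of the `N`-period policy-iteration map:
`Σ₀^β = Sig0` and `Σₙ^β = Σ_{n-1}^β σu²/(βₙ² Σ_{n-1}^β Δ + σu²)`. -/
noncomputable def kSig (Δ σu Sig0 : ℝ) (β : ℕ → ℝ) : ℕ → ℝ
  | 0 => Sig0
  | n + 1 =>
      kSig Δ σu Sig0 β n * σu ^ 2 /
        ((β (n + 1)) ^ 2 * kSig Δ σu Sig0 β n * Δ + σu ^ 2)

/-- Kyle's lambda `λₙ^β = βₙ Σ_{n-1}^β/(βₙ² Σ_{n-1}^β Δ + σu²)`. -/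
noncomputable def kLam (Δ σu Sig0 : ℝ) (β : ℕ → ℝ) (n : ℕ) : ℝ :=
  β n * kSig Δ σu Sig0 β (n - 1) /
    ((β n) ^ 2 * kSig Δ σu Sig0 β (n - 1) * Δ + σu ^ 2)

/-- Backward recursion for `αₙ^β`, indexed by the number of remaining steps `k = N - n`:
`α_N^β = 0` and `α_{n-1}^β = 1/(4 λₙ^β (1 - αₙ^β λₙ^β))`. -/
noncomputable def kAlphaAux (Δ σu Sig0 : ℝ) (N : ℕ) (β : ℕ → ℝ) : ℕ → ℝ
  | 0 => 0
  | k + 1 =>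
      1 / (4 * kLam Δ σu Sig0 β (N - k) *
        (1 - kAlphaAux Δ σu Sig0 N β k * kLam Δ σu Sig0 β (N - k)))

/-- `αₙ^β` for the `N`-period policy-iteration map. -/
noncomputable def kAlpha (Δ σu Sig0 : ℝ) (N : ℕ) (β : ℕ → ℝ) (n : ℕ) : ℝ :=
  kAlphaAux Δ σu Sig0 N β (N - n)

/-- The `n`-th coordinate of the `N`-period policy-iteration map:
`T(β)ₙ = (1 - 2 αₙ^β λₙ^β)/(2 Δ λₙ^β (1 - αₙ^β λₙ^β))`. -/
noncomputable def kT (Δ σu Sig0 : ℝ) (N : ℕ) (β : ℕ → ℝ) (n : ℕ) : ℝ :=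
  (1 - 2 * kAlpha Δ σu Sig0 N β n * kLam Δ σu Sig0 β n) /
    (2 * Δ * kLam Δ σu Sig0 β n *
      (1 - kAlpha Δ σu Sig0 N β n * kLam Δ σu Sig0 β n))

/-- The domain of the `N`-period policy-iteration map: all denominators
appearing in `Σ`, `λ`, `α` and `T` are nonzero. -/
def kDom (Δ σu Sig0 : ℝ) (N : ℕ) (β : ℕ → ℝ) : Prop :=
  ∀ n, 1 ≤ n → n ≤ N →
    (β n) ^ 2 * kSig Δ σu Sig0 β (n - 1) * Δ + σu ^ 2 ≠ 0 ∧
    kLam Δ σu Sig0 β n ≠ 0 ∧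
    1 - kAlpha Δ σu Sig0 N β n * kLam Δ σu Sig0 β n ≠ 0

/-- Kyle's `N`-period equilibrium data: `b` is the autonomous sequence
(`b N = 1`, `b n ∈ (0,1)` for `n < N`, backward recursion), `S` the equilibrium
variance sequence and `βh` the equilibrium trading intensities. -/
structure KyleEq (Δ σu Sig0 : ℝ) (N : ℕ) (b S βh : ℕ → ℝ) : Prop where
  hbN : b N = 1
  hbIoo : ∀ n, 1 ≤ n → n < N → b n ∈ Set.Ioo (0 : ℝ) 1
  hbrec : ∀ n, 2 ≤ n → n ≤ N →
    (b n) ^ 2 = (b (n - 1)) ^ 2 / ((1 - (b (n - 1)) ^ 2) ^ 2 * (1 + (b (n - 1)) ^ 2))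
  hS0 : S 0 = Sig0
  hSrec : ∀ n, 1 ≤ n → n ≤ N → S n = S (n - 1) / (1 + (b n) ^ 2)
  hβ : ∀ n, 1 ≤ n → n ≤ N → βh n = b n * σu / Real.sqrt (S (n - 1) * Δ)

section scale

variable {Δ σu Sig0 k m : ℝ} (β : ℕ → ℝ)
variable (hσ : σu ≠ 0) (hSig0 : Sig0 ≠ 0) (hk : k ≠ 0)
variable (hkk : k ^ 2 * σu ^ 2 = Sig0 * Δ) (hm : m = k * σu ^ 2 / Sig0)

include hσ hSig0 hkk in
lemma kSig_scale (n : ℕ) :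
    kSig 1 1 1 (fun j => k * β j) n = kSig Δ σu Sig0 β n / Sig0 := by
  induction n with
  | zero => simp [kSig, div_self hSig0]
  | succ n ih =>
    set Sn := kSig Δ σu Sig0 β n with hSn
    have hden : (k * β (n+1)) ^ 2 * (Sn / Sig0) * 1 + 1 ^ 2
        = ((β (n+1)) ^ 2 * Sn * Δ + σu ^ 2) / σu ^ 2 := by
      field_simp
      linear_combination (β (n+1)) ^ 2 * Sn * hkk
    show kSig 1 1 1 (fun j => k * β j) n * 1 ^ 2 /
        ((k * β (n+1)) ^ 2 * kSig 1 1 1 (fun j => k * β j) n * 1 + 1 ^ 2) = _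
    rw [ih, hden]
    show (Sn / Sig0) * 1 ^ 2 / _ = Sn * σu ^ 2 / ((β (n+1)) ^ 2 * Sn * Δ + σu ^ 2) / Sig0
    rw [div_div_eq_mul_div]
    rcases eq_or_ne ((β (n+1)) ^ 2 * Sn * Δ + σu ^ 2) 0 with hD | hD
    · simp [hD]
    · field_simp

include hσ hSig0 hkk hm in
lemma kLam_scale (n : ℕ) :
    kLam 1 1 1 (fun j => k * β j) n = m * kLam Δ σu Sig0 β n := by
  have ih := kSig_scale (Δ := Δ) β hσ hSig0 hkk (n - 1)
  unfold kLam
  rw [ih]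
  set Sn := kSig Δ σu Sig0 β (n - 1) with hSn
  have hden : (k * β n) ^ 2 * (Sn / Sig0) * 1 + 1 ^ 2
      = ((β n) ^ 2 * Sn * Δ + σu ^ 2) / σu ^ 2 := by
    field_simp
    linear_combination (β n) ^ 2 * Sn * hkk
  rw [hden]
  rcases eq_or_ne ((β n) ^ 2 * Sn * Δ + σu ^ 2) 0 with hD | hD
  · simp [hD]
  · rw [hm, div_div_eq_mul_div]
    field_simp

include hσ hSig0 hk hkk hm in
lemma kAlphaAux_scale (N : ℕ) (j : ℕ) :
    kAlphaAux 1 1 1 N (fun i => k * β i) j = kAlphaAux Δ σu Sig0 N β j / m := by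
  induction j with
  | zero => simp [kAlphaAux]
  | succ j ih =>
    have hm' : m ≠ 0 := by
      rw [hm]
      have : σu ^ 2 ≠ 0 := pow_ne_zero 2 hσ
      positivity
    unfold kAlphaAux
    rw [ih, kLam_scale β hσ hSig0 hkk hm (N - j)]
    set α := kAlphaAux Δ σu Sig0 N β j
    set lam := kLam Δ σu Sig0 β (N - j)
    have h1 : α / m * (m * lam) = α * lam := by
      field_simp
    rw [h1]
    have h2 : 4 * (m * lam) * (1 - α * lam) = m * (4 * lam * (1 - α * lam)) := by ring
    rw [h2, one_div, mul_inv, div_eq_mul_inv, one_div, mul_comm m⁻¹]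

include hσ hSig0 hk hkk hm in
lemma kT_scale (N n : ℕ) :
    kT 1 1 1 N (fun i => k * β i) n = k * kT Δ σu Sig0 N β n := by
  have hm' : m ≠ 0 := by
    rw [hm]
    have : σu ^ 2 ≠ 0 := pow_ne_zero 2 hσ
    positivity
  have hΔ : Δ = k * m := by
    rw [hm, mul_div_assoc']
    rw [eq_div_iff hSig0]
    linear_combination -hkk
  unfold kT kAlpha
  rw [kAlphaAux_scale β hσ hSig0 hk hkk hm N (N - n), kLam_scale β hσ hSig0 hkk hm n]
  set α := kAlphaAux Δ σu Sig0 N β (N - n)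
  set lam := kLam Δ σu Sig0 β n
  have h1 : α / m * (m * lam) = α * lam := by field_simp
  have h2 : 2 * (α / m) * (m * lam) = 2 * α * lam := by field_simp
  have h3 : 2 * (k * m) * lam * (1 - α * lam) = k * (2 * 1 * (m * lam) * (1 - α * lam)) := by
    ring
  rw [h1, h2, hΔ, h3, ← mul_div_assoc, mul_div_mul_left _ _ hk]

end scale

section congr

variable {Δ σu Sig0 : ℝ} {β β' : ℕ → ℝ}

lemma kSig_congr {M : ℕ} (h : ∀ j, 1 ≤ j → j ≤ M → β j = β' j) (n : ℕ) (hn : n ≤ M) :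
    kSig Δ σu Sig0 β n = kSig Δ σu Sig0 β' n := by
  induction n with
  | zero => rfl
  | succ n ih =>
    have ih' := ih (le_trans (Nat.le_succ n) hn)
    show kSig Δ σu Sig0 β n * σu ^ 2 / _ = kSig Δ σu Sig0 β' n * σu ^ 2 / _
    rw [ih', h (n+1) (Nat.succ_le_succ (Nat.zero_le n)) hn]

lemma kLam_congr {M : ℕ} (h : ∀ j, 1 ≤ j → j ≤ M → β j = β' j) {n : ℕ}
    (h1 : 1 ≤ n) (h2 : n ≤ M) :
    kLam Δ σu Sig0 β n = kLam Δ σu Sig0 β' n := by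
  unfold kLam
  rw [kSig_congr h (n-1) (le_trans (Nat.sub_le n 1) h2), h n h1 h2]

lemma kAlphaAux_congr {N : ℕ} (h : ∀ j, 1 ≤ j → j ≤ N → β j = β' j) (hN : 1 ≤ N) (j : ℕ)
    (hj : j ≤ N - 1) :
    kAlphaAux Δ σu Sig0 N β j = kAlphaAux Δ σu Sig0 N β' j := by
  induction j with
  | zero => rfl
  | succ j ih =>
    have ih' := ih (le_trans (Nat.le_succ j) hj)
    have hlam : kLam Δ σu Sig0 β (N - j) = kLam Δ σu Sig0 β' (N - j) :=
      kLam_congr h (by omega) (Nat.sub_le N j)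
    unfold kAlphaAux
    rw [ih', hlam]

lemma kT_congr {N : ℕ} (h : ∀ j, 1 ≤ j → j ≤ N → β j = β' j) {n : ℕ}
    (h1 : 1 ≤ n) (h2 : n ≤ N) :
    kT Δ σu Sig0 N β n = kT Δ σu Sig0 N β' n := by
  unfold kT kAlpha
  rw [kAlphaAux_congr h (le_trans h1 h2) (N - n) (by omega), kLam_congr h h1 h2]

end congr

lemma deriv_scale (f : ℝ → ℝ) (k c a : ℝ) (hk : k ≠ 0) :
    deriv (fun x => c * f (k * x)) a = c * (k * deriv f (k * a)) := by
  by_cases hf : DifferentiableAt ℝ f (k * a)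
  · have h1 : HasDerivAt (fun x : ℝ => k * x) k a := by
      simpa using (hasDerivAt_id a).const_mul k
    have h2 : HasDerivAt (fun x => f (k * x)) (deriv f (k * a) * k) a :=
      (hf.hasDerivAt).comp a h1
    have h3 : HasDerivAt (fun x => c * f (k * x)) (c * (deriv f (k * a) * k)) a :=
      h2.const_mul c
    rw [h3.deriv]; ring
  · rw [deriv_zero_of_not_differentiableAt hf]
    rcases eq_or_ne c 0 with hc | hc
    · simp [hc]
    · have hnd : ¬ DifferentiableAt ℝ (fun x => c * f (k * x)) a := by
        intro hfd
        apply hf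
        have hg : DifferentiableAt ℝ (fun x => c⁻¹ * (c * f (k * x))) a := hfd.const_mul _
        have hg' : (fun x => c⁻¹ * (c * f (k * x))) = fun x => f (k * x) := by
          funext x; field_simp
        rw [hg'] at hg
        have hmul : DifferentiableAt ℝ (fun y : ℝ => k⁻¹ * y) (k * a) :=
          differentiableAt_id.const_mul k⁻¹
        have hpt : k⁻¹ * (k * a) = a := by field_simp
        have hg2 : DifferentiableAt ℝ (fun x => f (k * x)) (k⁻¹ * (k * a)) := by
          rw [hpt]; exact hg
        have hcomp := DifferentiableAt.comp (k * a) hg2 hmul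
        have heqf : ((fun x => f (k * x)) ∘ fun y : ℝ => k⁻¹ * y) = f := by
          funext y
          simp only [Function.comp_apply, ← mul_assoc, mul_inv_cancel₀ hk, one_mul]
        rwa [heqf] at hcomp
      rw [deriv_zero_of_not_differentiableAt hnd]
      ring

lemma sqrt_scale {Sv Δ σu Sig0 : ℝ} (hS : 0 < Sv) (hΔ : 0 < Δ) (hσ : 0 < σu)
    (hSig : 0 < Sig0) (bv : ℝ) :
    bv * 1 / Real.sqrt (Sv / Sig0 * 1) =
      Real.sqrt (Sig0 * Δ) / σu * (bv * σu / Real.sqrt (Sv * Δ)) := by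
  rw [mul_one, mul_one, Real.sqrt_div hS.le, Real.sqrt_mul hSig.le, Real.sqrt_mul hS.le]
  have h1 : Real.sqrt Sv ≠ 0 := (Real.sqrt_pos.mpr hS).ne'
  have h2 : Real.sqrt Sig0 ≠ 0 := (Real.sqrt_pos.mpr hSig).ne'
  have h3 : Real.sqrt Δ ≠ 0 := (Real.sqrt_pos.mpr hΔ).ne'
  field_simp


/-- For `N = 3`: the derivative of `T̃(β) := T(β, β̂₂, β̂₃)₁` at the equilibrium first
coordinate does not depend on the parameters `(Δ, σu, Sig0)`: it equals its value
for the normalized parameters `Δ = σu = Sig0 = 1`. -/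
theorem three_period_derivative_parameter_free (Δ σu Sig0 : ℝ) (hΔ : 0 < Δ)
    (hσ : 0 < σu) (hSig : 0 < Sig0)
    (b S βh : ℕ → ℝ) (heq : KyleEq Δ σu Sig0 3 b S βh)
    (S1 βh1 : ℕ → ℝ) (heq1 : KyleEq 1 1 1 3 b S1 βh1) :
    deriv (fun x => kT Δ σu Sig0 3 (fun n => if n = 1 then x else βh n) 1) (βh 1) =
      deriv (fun x => kT 1 1 1 3 (fun n => if n = 1 then x else βh1 n) 1) (βh1 1) := by
  set k : ℝ := Real.sqrt (Sig0 * Δ) / σu with hkdef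
  have hk : 0 < k := div_pos (Real.sqrt_pos.mpr (by positivity)) hσ
  have hsq : Real.sqrt (Sig0 * Δ) ^ 2 = Sig0 * Δ := Real.sq_sqrt (by positivity)
  have hkk : k ^ 2 * σu ^ 2 = Sig0 * Δ := by
    rw [hkdef, div_pow, div_mul_cancel₀ _ (pow_ne_zero 2 hσ.ne'), hsq]
  -- positivity of the variance sequence
  have hS0 : S 0 = Sig0 := heq.hS0
  have hS1 : S 1 = S 0 / (1 + (b 1) ^ 2) := by
    have := heq.hSrec 1 (by norm_num) (by norm_num); simpa using this
  have hS2 : S 2 = S 1 / (1 + (b 2) ^ 2) := by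
    have := heq.hSrec 2 (by norm_num) (by norm_num); simpa using this
  have hb1 : (0:ℝ) < 1 + (b 1) ^ 2 := by positivity
  have hb2 : (0:ℝ) < 1 + (b 2) ^ 2 := by positivity
  have hS0p : 0 < S 0 := by rw [hS0]; exact hSig
  have hS1p : 0 < S 1 := by rw [hS1]; positivity
  have hS2p : 0 < S 2 := by rw [hS2]; positivity
  -- normalized variance sequence
  have hT0 : S1 0 = S 0 / Sig0 := by
    rw [heq1.hS0, hS0, div_self hSig.ne']
  have hT1 : S1 1 = S 1 / Sig0 := by
    have h := heq1.hSrec 1 (by norm_num) (by norm_num)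
    simp only [show (1:ℕ) - 1 = 0 from rfl] at h
    rw [h, hT0, hS1, div_div, div_div, mul_comm]
  have hT2 : S1 2 = S 2 / Sig0 := by
    have h := heq1.hSrec 2 (by norm_num) (by norm_num)
    simp only [show (2:ℕ) - 1 = 1 from rfl] at h
    rw [h, hT1, hS2, div_div, div_div, mul_comm]
  -- the equilibrium coordinates scale by k
  have key : ∀ n, 1 ≤ n → n ≤ 3 → βh1 n = k * βh n := by
    intro n h1 h2
    rw [heq1.hβ n h1 h2, heq.hβ n h1 h2, hkdef]
    interval_cases n
    · simp only [show (1:ℕ) - 1 = 0 from rfl, hT0]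
      exact sqrt_scale hS0p hΔ hσ hSig (b 1)
    · simp only [show (2:ℕ) - 1 = 1 from rfl, hT1]
      exact sqrt_scale hS1p hΔ hσ hSig (b 2)
    · simp only [show (3:ℕ) - 1 = 2 from rfl, hT2]
      exact sqrt_scale hS2p hΔ hσ hSig (b 3)
  -- rewrite the left function as a scaled version of the right one
  have hfun : (fun x => kT Δ σu Sig0 3 (fun n => if n = 1 then x else βh n) 1)
      = fun x => (1/k) * kT 1 1 1 3 (fun n => if n = 1 then k * x else βh1 n) 1 := by
    funext x
    have hcg : kT 1 1 1 3 (fun n => if n = 1 then k * x else βh1 n) 1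
        = kT 1 1 1 3 (fun n => k * (if n = 1 then x else βh n)) 1 := by
      refine kT_congr ?_ le_rfl (by norm_num)
      intro j h1 h2
      interval_cases j
      · simp
      · simpa using key 2 (by norm_num) (by norm_num)
      · simpa using key 3 (by norm_num) (by norm_num)
    rw [hcg,
      kT_scale (Δ := Δ) (σu := σu) (Sig0 := Sig0) (m := k * σu ^ 2 / Sig0)
        _ hσ.ne' hSig.ne' hk.ne' hkk rfl,
      one_div, inv_mul_cancel_left₀ hk.ne']
  rw [hfun]
  have hd : deriv (fun x => (1/k) * kT 1 1 1 3 (fun n => if n = 1 then k * x else βh1 n) 1)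
      (βh 1) = (1/k) * (k *
        deriv (fun y => kT 1 1 1 3 (fun n => if n = 1 then y else βh1 n) 1) (k * βh 1)) :=
    deriv_scale (fun y => kT 1 1 1 3 (fun n => if n = 1 then y else βh1 n) 1) k (1/k)
      (βh 1) hk.ne'
  rw [hd, ← key 1 le_rfl (by norm_num), one_div, inv_mul_cancel_left₀ hk.ne']
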